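/- For any Ferrers board B = (b_1,...,b_n) with weakly increasing nonnegative column heights, and any positive integer m, the sum over k from 0 to n of r_{k,m}(B) · x↓_{n-k,m} equals the product over j from 1 to n of factors F_j, where F_j = x + ⌊b_j⌋_m − (j−1)m + ρ_m(z) if j is the last index in its zone z, and F_j = x + ⌊b_j⌋_m − (j−1)m otherwise. -/
import Mathlib


/-- The `m`-falling factorial `x↓_{n,m} = x(x-m)(x-2m)⋯(x-(n-1)m)`. -/
def fallFact (x : ℤ) (n m : ℕ) : ℤ := ∏ i ∈ Finset.range n, (x - (m : ℤ) * i)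

/-- `(i, j)` (row `i`, column `j`, both 1-indexed) is a cell of the Ferrers board
with column heights `b 1, …, b n`. -/
def IsCell (b : ℕ → ℕ) (n : ℕ) (c : ℕ × ℕ) : Prop :=
  1 ≤ c.2 ∧ c.2 ≤ n ∧ 1 ≤ c.1 ∧ c.1 ≤ b c.2

/-- An `m`-level rook placement on the board: cells of the board, no two rooks in the
same column, and no two rooks in the same level (level of row `i` is `(i-1)/m`). -/
def IsMLevelPlacement (m : ℕ) (b : ℕ → ℕ) (n : ℕ) (P : Finset (ℕ × ℕ)) : Prop :=
  (∀ c ∈ P, IsCell b n c) ∧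
  (∀ c ∈ P, ∀ c' ∈ P, c.2 = c'.2 → c = c') ∧
  (∀ c ∈ P, ∀ c' ∈ P, (c.1 - 1) / m = (c'.1 - 1) / m → c = c')

/-- `r_{k,m}(B)`: the number of `m`-level rook placements with `k` rooks. -/
noncomputable def rkm (m : ℕ) (b : ℕ → ℕ) (n k : ℕ) : ℕ :=
  Nat.card {P : Finset (ℕ × ℕ) // IsMLevelPlacement m b n P ∧ P.card = k}

/-- The `m`-remainder of the zone of column `j`: the sum of `b i mod m` over all
columns `i` in the same zone as `j` (for a monotone board, the zone of `j` is exactly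
the set of columns with the same `m`-floor). -/
def zoneRem (m : ℕ) (b : ℕ → ℕ) (n j : ℕ) : ℕ :=
  ∑ i ∈ Finset.Icc 1 n, if m * (b i / m) = m * (b j / m) then b i % m else 0

/-! ### Auxiliary material -/

lemma mf_div_eq_iff {m : ℕ} (hm : 0 < m) (i l : ℕ) :
    i / m = l ↔ m * l ≤ i ∧ i < m * l + m := by
  constructor
  · rintro rfl
    have h1 := Nat.div_add_mod i m
    have h2 := Nat.mod_lt i hm
    omega
  · rintro ⟨h1, h2⟩
    apply Nat.le_antisymm
    · exact Nat.le_of_lt_succ (by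
        rw [Nat.div_lt_iff_lt_mul hm]
        calc i < m * l + m := h2
          _ = (l + 1) * m := by ring)
    · exact (Nat.le_div_iff_mul_le hm).mpr (by linarith [Nat.mul_comm l m])

instance instDecIsML (m : ℕ) (b : ℕ → ℕ) (n : ℕ) (P : Finset (ℕ × ℕ)) :
    Decidable (IsMLevelPlacement m b n P) := by
  unfold IsMLevelPlacement IsCell; infer_instance

/-- The finset of `m`-level rook placements with `k` rooks. -/
def plF (m : ℕ) (b : ℕ → ℕ) (n k : ℕ) : Finset (Finset (ℕ × ℕ)) :=
  (Finset.Icc 1 ((Finset.Icc 1 n).sup b) ×ˢ Finset.Icc 1 n).powerset.filter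
    (fun P => IsMLevelPlacement m b n P ∧ P.card = k)

lemma mem_plF {m : ℕ} {b : ℕ → ℕ} {n k : ℕ} {P : Finset (ℕ × ℕ)} :
    P ∈ plF m b n k ↔ IsMLevelPlacement m b n P ∧ P.card = k := by
  constructor
  · exact fun h => (Finset.mem_filter.mp h).2
  · intro h
    refine Finset.mem_filter.mpr ⟨Finset.mem_powerset.mpr ?_, h⟩
    intro c hc
    obtain ⟨h1, h2, h3, h4⟩ := h.1.1 c hc
    refine Finset.mem_product.mpr ⟨Finset.mem_Icc.mpr ⟨h3, ?_⟩, Finset.mem_Icc.mpr ⟨h1, h2⟩⟩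
    exact le_trans h4 (Finset.le_sup (Finset.mem_Icc.mpr ⟨h1, h2⟩))

lemma rkm_eq (m : ℕ) (b : ℕ → ℕ) (n k : ℕ) : rkm m b n k = (plF m b n k).card := by
  have hset : {P : Finset (ℕ × ℕ) | IsMLevelPlacement m b n P ∧ P.card = k}
      = ↑(plF m b n k) := by
    ext P; simp [mem_plF]
  calc rkm m b n k
      = Nat.card ↑{P : Finset (ℕ × ℕ) | IsMLevelPlacement m b n P ∧ P.card = k} := rfl
    _ = (plF m b n k).card := by
        rw [Nat.card_coe_set_eq, hset, Set.ncard_coe_finset]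

lemma plF_zero (m : ℕ) (b : ℕ → ℕ) (n : ℕ) : plF m b n 0 = {∅} := by
  ext P
  simp only [mem_plF, Finset.mem_singleton, ← Finset.card_eq_zero]
  constructor
  · exact fun h => h.2
  · intro h
    rw [Finset.card_eq_zero] at h
    subst h
    exact ⟨⟨fun c hc => absurd hc (Finset.notMem_empty c),
      fun c hc => absurd hc (Finset.notMem_empty c),
      fun c hc => absurd hc (Finset.notMem_empty c)⟩, rfl⟩

lemma plF_empty_of_lt (m : ℕ) (b : ℕ → ℕ) (n k : ℕ) (h : n < k) : plF m b n k = ∅ := by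
  rw [Finset.eq_empty_iff_forall_notMem]
  intro P hP
  rw [mem_plF] at hP
  obtain ⟨⟨hcell, hcol, _⟩, hcard⟩ := hP
  have hle : P.card ≤ (Finset.Icc 1 n).card := by
    apply Finset.card_le_card_of_injOn (fun c => c.2)
    · intro c hc
      have := hcell c hc
      exact Finset.mem_Icc.mpr ⟨this.1, this.2.1⟩
    · intro c hc c' hc' hcc
      exact hcol c hc c' hc' hcc
  rw [Nat.card_Icc] at hle
  omega
lemma plF_filter_not_last (m : ℕ) (b : ℕ → ℕ) (n k : ℕ) :
    (plF m b (n+1) k).filter (fun P => ∀ c ∈ P, c.2 ≠ n+1) = plF m b n k := by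
  ext P
  simp only [Finset.mem_filter, mem_plF]
  constructor
  · rintro ⟨⟨⟨hcell, hcol, hlvl⟩, hcard⟩, hno⟩
    refine ⟨⟨fun c hc => ?_, hcol, hlvl⟩, hcard⟩
    obtain ⟨h1, h2, h3, h4⟩ := hcell c hc
    have := hno c hc
    exact ⟨h1, by omega, h3, h4⟩
  · rintro ⟨⟨hcell, hcol, hlvl⟩, hcard⟩
    refine ⟨⟨⟨fun c hc => ?_, hcol, hlvl⟩, hcard⟩, fun c hc => ?_⟩
    · obtain ⟨h1, h2, h3, h4⟩ := hcell c hc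
      exact ⟨h1, by omega, h3, h4⟩
    · have := (hcell c hc).2.1
      omega

lemma card_split (m : ℕ) (b : ℕ → ℕ) (n k : ℕ) :
    (plF m b (n+1) k).card =
      ((plF m b (n+1) k).filter (fun P => ∃ c ∈ P, c.2 = n+1)).card + (plF m b n k).card := by
  rw [← plF_filter_not_last m b n k]
  rw [← Finset.card_filter_add_card_filter_not
    (s := plF m b (n+1) k) (p := fun P => ∃ c ∈ P, c.2 = n+1)]
  congr 2
  apply Finset.filter_congr
  intro P _
  simp only [not_exists]
  push_neg
  rfl

/-- number of free rows in the new column `n+1` given a placement `P` on the first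
`n` columns -/
def avail (m : ℕ) (b : ℕ → ℕ) (n : ℕ) (P : Finset (ℕ × ℕ)) : ℕ :=
  ((Finset.Icc 1 (b (n+1))).filter (fun i => ∀ c ∈ P, (i - 1) / m ≠ (c.1 - 1) / m)).card

lemma card_uses_last (m : ℕ) (b : ℕ → ℕ) (n k : ℕ) :
    ((plF m b (n+1) (k+1)).filter (fun P => ∃ c ∈ P, c.2 = n+1)).card =
      ∑ P' ∈ plF m b n k, avail m b n P' := by
  set s := (plF m b (n+1) (k+1)).filter (fun P => ∃ c ∈ P, c.2 = n+1) with hs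
  have hmap : ∀ P ∈ s, P.filter (fun c => c.2 ≠ n+1) ∈ plF m b n k := by
    intro P hP
    rw [hs, Finset.mem_filter, mem_plF] at hP
    obtain ⟨⟨⟨hcell, hcol, hlvl⟩, hcard⟩, c₀, hc₀, hc₀n⟩ := hP
    rw [mem_plF]
    refine ⟨⟨fun c hc => ?_, ?_, ?_⟩, ?_⟩
    · rw [Finset.mem_filter] at hc
      obtain ⟨h1, h2, h3, h4⟩ := hcell c hc.1
      exact ⟨h1, by have := hc.2; omega, h3, h4⟩
    · intro c hc c' hc' h
      exact hcol c (Finset.mem_filter.mp hc).1 c' (Finset.mem_filter.mp hc').1 h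
    · intro c hc c' hc' h
      exact hlvl c (Finset.mem_filter.mp hc).1 c' (Finset.mem_filter.mp hc').1 h
    · have h1 : (P.filter (fun c => c.2 = n+1)) = {c₀} := by
        ext c
        simp only [Finset.mem_filter, Finset.mem_singleton]
        constructor
        · rintro ⟨hcP, hcn⟩
          exact hcol c hcP c₀ hc₀ (by rw [hcn, hc₀n])
        · rintro rfl; exact ⟨hc₀, hc₀n⟩
      have h2 := Finset.card_filter_add_card_filter_not
        (s := P) (p := fun c => c.2 = n+1)
      have h3 : (P.filter (fun c => ¬ c.2 = n+1)).card = k := by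
        rw [h1] at h2
        simp only [Finset.card_singleton] at h2
        omega
      rw [← h3]
  rw [Finset.card_eq_sum_card_fiberwise hmap]
  apply Finset.sum_congr rfl
  intro P' hP'
  rw [mem_plF] at hP'
  obtain ⟨⟨hcell', hcol', hlvl'⟩, hcard'⟩ := hP'
  rw [avail]
  symm
  apply Finset.card_bij (fun i _ => insert (i, n+1) P')
  · -- maps into fiber
    intro i hi
    rw [Finset.mem_filter, Finset.mem_Icc] at hi
    obtain ⟨⟨hi1, hi2⟩, hfree⟩ := hi
    have hnotmem : (i, n+1) ∉ P' := by
      intro hmem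
      have := (hcell' (i, n+1) hmem).2.1
      omega
    rw [Finset.mem_filter, hs, Finset.mem_filter, mem_plF]
    refine ⟨⟨⟨⟨?_, ?_, ?_⟩, ?_⟩, ⟨(i, n+1), Finset.mem_insert_self _ _, rfl⟩⟩, ?_⟩
    · intro c hc
      rcases Finset.mem_insert.mp hc with rfl | hc
      · exact ⟨by omega, le_refl _, hi1, hi2⟩
      · obtain ⟨h1, h2, h3, h4⟩ := hcell' c hc
        exact ⟨h1, by omega, h3, h4⟩
    · intro c hc c' hc' h
      rcases Finset.mem_insert.mp hc with rfl | hc <;>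
        rcases Finset.mem_insert.mp hc' with rfl | hc'
      · rfl
      · exact absurd ((hcell' c' hc').2.1) (by rw [← h]; simp)
      · exact absurd ((hcell' c hc).2.1) (by rw [h]; simp)
      · exact hcol' c hc c' hc' h
    · intro c hc c' hc' h
      rcases Finset.mem_insert.mp hc with rfl | hc <;>
        rcases Finset.mem_insert.mp hc' with rfl | hc'
      · rfl
      · exact absurd h (hfree c' hc')
      · exact absurd h.symm (hfree c hc)
      · exact hlvl' c hc c' hc' h
    · rw [Finset.card_insert_of_notMem hnotmem, hcard']
    · -- filter equals P'
      ext c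
      simp only [Finset.mem_filter, Finset.mem_insert]
      constructor
      · rintro ⟨rfl | hc, hcn⟩
        · exact absurd rfl hcn
        · exact hc
      · intro hc
        have := (hcell' c hc).2.1
        exact ⟨Or.inr hc, by omega⟩
  · -- injective
    intro i hi i' hi' h
    rw [Finset.mem_filter, Finset.mem_Icc] at hi hi'
    have : (i, n+1) ∈ insert (i', n+1) P' := by rw [← h]; exact Finset.mem_insert_self _ _
    rcases Finset.mem_insert.mp this with h2 | h2
    · exact congrArg Prod.fst h2
    · have := (hcell' (i, n+1) h2).2.1; omega
  · -- surjective
    intro P hP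
    rw [Finset.mem_filter, hs, Finset.mem_filter, mem_plF] at hP
    obtain ⟨⟨⟨⟨hcell, hcol, hlvl⟩, hcard⟩, c₀, hc₀, hc₀n⟩, hfil⟩ := hP
    have hc₀eq : c₀ = (c₀.1, n+1) := by rw [← hc₀n]
    refine ⟨c₀.1, ?_, ?_⟩
    · rw [Finset.mem_filter, Finset.mem_Icc]
      obtain ⟨h1, h2, h3, h4⟩ := hcell c₀ hc₀
      refine ⟨⟨h3, by rwa [hc₀n] at h4⟩, ?_⟩
      intro c hc h
      rw [← hfil, Finset.mem_filter] at hc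
      have hne : c ≠ c₀ := by
        intro h'
        rw [h'] at hc
        exact hc.2 hc₀n
      exact hne (hlvl c hc.1 c₀ hc₀ h.symm)
    · rw [← hc₀eq]
      ext c
      simp only [Finset.mem_insert, ← hfil, Finset.mem_filter]
      constructor
      · rintro (rfl | ⟨hc, _⟩)
        · exact hc₀
        · exact hc
      · intro hc
        by_cases hn : c.2 = n+1
        · exact Or.inl (hcol c hc c₀ hc₀ (by rw [hn, hc₀n]))
        · exact Or.inr ⟨hc, hn⟩
lemma avail_eq (m : ℕ) (hm : 0 < m) (b : ℕ → ℕ) (n : ℕ)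
    (hmono : ∀ j k, 1 ≤ j → j ≤ k → k ≤ n+1 → b j ≤ b k) (k : ℕ) (P' : Finset (ℕ × ℕ))
    (hP' : P' ∈ plF m b n k) :
    avail m b n P' + m * k =
      b (n+1) + (m - b (n+1) % m) *
        (if ∃ c ∈ P', (c.1 - 1) / m = b (n+1) / m then 1 else 0) := by
  rw [mem_plF] at hP'
  obtain ⟨⟨hcell, hcol, hlvl⟩, hcard⟩ := hP'
  set N := b (n+1) with hNdef
  have hNT := Nat.div_add_mod N m
  have hρ := Nat.mod_lt N hm
  -- the set of blocked rows
  have h_ab : avail m b n P' +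
      ((Finset.Icc 1 N).filter (fun i => ¬ ∀ c ∈ P', (i - 1) / m ≠ (c.1 - 1) / m)).card
        = N := by
    rw [avail]
    rw [Finset.card_filter_add_card_filter_not
      (p := fun i => ∀ c ∈ P', (i - 1) / m ≠ (c.1 - 1) / m)]
    rw [Nat.card_Icc]
    omega
  have hbad : ((Finset.Icc 1 N).filter (fun i => ¬ ∀ c ∈ P', (i - 1) / m ≠ (c.1 - 1) / m))
      = P'.biUnion (fun c => (Finset.Icc 1 N).filter (fun i => (i - 1) / m = (c.1 - 1) / m)) := by
    ext i
    simp only [Finset.mem_filter, Finset.mem_biUnion, not_forall]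
    push_neg
    constructor
    · rintro ⟨hi, c, hc, hic⟩
      exact ⟨c, hc, hi, hic⟩
    · rintro ⟨c, hc, hi, hic⟩
      exact ⟨hi, c, hc, hic⟩
  have hdisj : ∀ c ∈ P', ∀ c' ∈ P', c ≠ c' →
      Disjoint ((Finset.Icc 1 N).filter (fun i => (i - 1) / m = (c.1 - 1) / m))
        ((Finset.Icc 1 N).filter (fun i => (i - 1) / m = (c'.1 - 1) / m)) := by
    intro c hc c' hc' hne
    rw [Finset.disjoint_left]
    intro i hi hi'
    rw [Finset.mem_filter] at hi hi'
    exact hne (hlvl c hc c' hc' (by rw [← hi.2, hi'.2]))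
  have hpercell : ∀ c ∈ P',
      ((Finset.Icc 1 N).filter (fun i => (i - 1) / m = (c.1 - 1) / m)).card =
        if (c.1 - 1) / m = N / m then N % m else m := by
    intro c hc
    obtain ⟨h1, h2, h3, h4⟩ := hcell c hc
    have hcN : c.1 ≤ N := le_trans h4 (hmono c.2 (n+1) h1 (by omega) (le_refl _))
    set l := (c.1 - 1) / m with hl
    have hl1 : m * l ≤ c.1 - 1 ∧ c.1 - 1 < m * l + m := (mf_div_eq_iff hm _ _).mp rfl
    have hfil : ((Finset.Icc 1 N).filter (fun i => (i - 1) / m = l)) =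
        Finset.Icc (m * l + 1) (min N (m * l + m)) := by
      ext i
      simp only [Finset.mem_filter, Finset.mem_Icc, mf_div_eq_iff hm, le_min_iff]
      omega
    rw [hfil, Nat.card_Icc]
    by_cases hT : l = N / m
    · rw [if_pos hT, hT]
      have : min N (m * (N / m) + m) = N := by omega
      rw [this]
      omega
    · rw [if_neg hT]
      have hlle : l ≤ N / m := by
        rw [hl]
        exact Nat.div_le_div_right (by omega)
      have hllt : l + 1 ≤ N / m := by omega
      have : m * (l + 1) ≤ m * (N / m) := Nat.mul_le_mul_left m hllt
      rw [Nat.mul_succ] at this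
      have : min N (m * l + m) = m * l + m := by omega
      rw [this]
      omega
  have hsum : ((Finset.Icc 1 N).filter
      (fun i => ¬ ∀ c ∈ P', (i - 1) / m ≠ (c.1 - 1) / m)).card =
      ∑ c ∈ P', if (c.1 - 1) / m = N / m then N % m else m := by
    rw [hbad, Finset.card_biUnion hdisj]
    exact Finset.sum_congr rfl hpercell
  -- count of cells at the top level
  set cntT := (P'.filter (fun c => (c.1 - 1) / m = N / m)).card with hcntT
  have hsum2 : (∑ c ∈ P', if (c.1 - 1) / m = N / m then N % m else m) =
      (N % m) * cntT + m * (P'.filter (fun c => ¬ (c.1 - 1) / m = N / m)).card := by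
    rw [Finset.sum_ite, Finset.sum_const, Finset.sum_const, smul_eq_mul, smul_eq_mul]
    ring
  have hcnt_split : cntT + (P'.filter (fun c => ¬ (c.1 - 1) / m = N / m)).card = k := by
    rw [hcntT, Finset.card_filter_add_card_filter_not, hcard]
  have hcnt_le : cntT ≤ 1 := by
    rw [hcntT, Finset.card_le_one]
    intro c hc c' hc'
    rw [Finset.mem_filter] at hc hc'
    exact hlvl c hc.1 c' hc'.1 (by rw [hc.2, hc'.2])
  have hind : cntT = if ∃ c ∈ P', (c.1 - 1) / m = N / m then 1 else 0 := by
    by_cases hex : ∃ c ∈ P', (c.1 - 1) / m = N / m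
    · rw [if_pos hex]
      have : (P'.filter (fun c => (c.1 - 1) / m = N / m)).Nonempty := by
        obtain ⟨c, hc, hceq⟩ := hex
        exact ⟨c, Finset.mem_filter.mpr ⟨hc, hceq⟩⟩
      have := Finset.card_pos.mpr this
      omega
    · rw [if_neg hex, hcntT, Finset.card_eq_zero, Finset.filter_eq_empty_iff]
      intro c hc
      exact fun h => hex ⟨c, hc, h⟩
  rw [← hind]
  rw [hsum, hsum2] at h_ab
  set cntNT := (P'.filter (fun c => ¬ (c.1 - 1) / m = N / m)).card with hcntNT
  interval_cases cntT
  · simp only [Nat.mul_zero, Nat.zero_add] at h_ab ⊢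
    have hck : cntNT = k := by omega
    rw [hck] at h_ab
    omega
  · have hck : cntNT + 1 = k := by omega
    have hmk : m * k = m * cntNT + m := by rw [← hck, Nat.mul_succ]
    rw [hmk]
    omega

lemma plF_flatten (m : ℕ) (hm : 0 < m) (b : ℕ → ℕ) (n : ℕ)
    (hmono : ∀ j k, 1 ≤ j → j ≤ k → k ≤ n+1 → b j ≤ b k) (k : ℕ) :
    (plF m b n k).filter (fun P => ∀ c ∈ P, (c.1 - 1) / m ≠ b (n+1) / m) =
      plF m (fun j => min (b j) (m * (b (n+1) / m))) n k := by
  have hNT := Nat.div_add_mod (b (n+1)) m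
  have hρ := Nat.mod_lt (b (n+1)) hm
  ext P
  simp only [Finset.mem_filter, mem_plF]
  constructor
  · rintro ⟨⟨⟨hcell, hcol, hlvl⟩, hcard⟩, hT⟩
    refine ⟨⟨fun c hc => ?_, hcol, hlvl⟩, hcard⟩
    obtain ⟨h1, h2, h3, h4⟩ := hcell c hc
    refine ⟨h1, h2, h3, le_min h4 ?_⟩
    by_contra hlt
    push_neg at hlt
    apply hT c hc
    rw [mf_div_eq_iff hm]
    have hcN : c.1 ≤ b (n+1) := le_trans h4 (hmono c.2 (n+1) h1 (by omega) (le_refl _))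
    omega
  · rintro ⟨⟨hcell, hcol, hlvl⟩, hcard⟩
    refine ⟨⟨⟨fun c hc => ?_, hcol, hlvl⟩, hcard⟩, fun c hc => ?_⟩
    · obtain ⟨h1, h2, h3, h4⟩ := hcell c hc
      exact ⟨h1, h2, h3, le_trans h4 (min_le_left _ _)⟩
    · obtain ⟨h1, h2, h3, h4⟩ := hcell c hc
      have h4' : c.1 ≤ m * (b (n+1) / m) := le_trans h4 (min_le_right _ _)
      intro heq
      rw [mf_div_eq_iff hm] at heq
      omega
lemma card_rec (m : ℕ) (hm : 0 < m) (b : ℕ → ℕ) (n : ℕ)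
    (hmono : ∀ j k, 1 ≤ j → j ≤ k → k ≤ n+1 → b j ≤ b k) (k : ℕ) :
    ((plF m b (n+1) (k+1)).card : ℤ) =
      ((plF m b n (k+1)).card : ℤ)
      + ((b (n+1) : ℤ) + m - (b (n+1) % m : ℕ) - m * k) * ((plF m b n k).card : ℤ)
      - ((m : ℤ) - (b (n+1) % m : ℕ)) *
          ((plF m (fun j => min (b j) (m * (b (n+1) / m))) n k).card : ℤ) := by
  have hρ : b (n+1) % m < m := Nat.mod_lt _ hm
  have hnat : (∑ P' ∈ plF m b n k, avail m b n P') + (plF m b n k).card * (m * k)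
      = (plF m b n k).card * b (n+1)
        + (m - b (n+1) % m) *
          ((plF m b n k).filter (fun P => ∃ c ∈ P, (c.1 - 1) / m = b (n+1) / m)).card := by
    calc (∑ P' ∈ plF m b n k, avail m b n P') + (plF m b n k).card * (m * k)
        = ∑ P' ∈ plF m b n k, (avail m b n P' + m * k) := by
          rw [Finset.sum_add_distrib, Finset.sum_const, smul_eq_mul]
      _ = ∑ P' ∈ plF m b n k, (b (n+1) + (m - b (n+1) % m) *
            (if ∃ c ∈ P', (c.1 - 1) / m = b (n+1) / m then 1 else 0)) :=
          Finset.sum_congr rfl (avail_eq m hm b n hmono k)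
      _ = _ := by
          rw [Finset.sum_add_distrib, Finset.sum_const, smul_eq_mul, ← Finset.mul_sum,
            Finset.sum_boole]
          simp
  have hcongr : (plF m b n k).filter (fun P => ¬ ∀ c ∈ P, (c.1 - 1) / m ≠ b (n+1) / m) =
      (plF m b n k).filter (fun P => ∃ c ∈ P, (c.1 - 1) / m = b (n+1) / m) := by
    apply Finset.filter_congr
    intro P _
    push_neg
    rfl
  have hflt : ((plF m b n k).filter
        (fun P => ∃ c ∈ P, (c.1 - 1) / m = b (n+1) / m)).card
      + (plF m (fun j => min (b j) (m * (b (n+1) / m))) n k).card = (plF m b n k).card := by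
    have h := Finset.card_filter_add_card_filter_not
      (s := plF m b n k) (p := fun P => ∀ c ∈ P, (c.1 - 1) / m ≠ b (n+1) / m)
    rw [hcongr, plF_flatten m hm b n hmono k] at h
    omega
  have h1 := card_split m b n (k+1)
  have h2 := card_uses_last m b n k
  have hnat' := congrArg (Nat.cast : ℕ → ℤ) hnat
  have hflt' := congrArg (Nat.cast : ℕ → ℤ) hflt
  have h1' := congrArg (Nat.cast : ℕ → ℤ) h1
  have h2' := congrArg (Nat.cast : ℕ → ℤ) h2
  push_cast [Nat.cast_sub hρ.le] at hnat' hflt' h1' h2' ⊢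
  rw [h1', h2']
  linear_combination hnat' + ((m : ℤ) - (b (n+1) : ℤ) % (m : ℤ)) * hflt'

/-- The left-hand side of the factorization theorem, in terms of `plF`. -/
def Lsum (m : ℕ) (b : ℕ → ℕ) (n : ℕ) (x : ℤ) : ℤ :=
  ∑ k ∈ Finset.range (n+1), ((plF m b n k).card : ℤ) * fallFact x (n - k) m

lemma fallFact_succ (x : ℤ) (n m : ℕ) :
    fallFact x (n+1) m = fallFact x n m * (x - (m : ℤ) * n) := Finset.prod_range_succ _ _

lemma Lsum_rec (m : ℕ) (hm : 0 < m) (b : ℕ → ℕ) (n : ℕ)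
    (hmono : ∀ j k, 1 ≤ j → j ≤ k → k ≤ n+1 → b j ≤ b k) (x : ℤ) :
    Lsum m b (n+1) x =
      (x + (m * (b (n+1) / m) : ℕ) + m - m * (n : ℤ)) * Lsum m b n x
      - ((m : ℤ) - (b (n+1) % m : ℕ)) * Lsum m (fun j => min (b j) (m * (b (n+1) / m))) n x := by
  have hNT := Nat.div_add_mod (b (n+1)) m
  have hfρ : ((m * (b (n+1) / m) : ℕ) : ℤ) + ((b (n+1) % m : ℕ) : ℤ) = (b (n+1) : ℤ) := by
    exact_mod_cast congrArg (Nat.cast : ℕ → ℤ) hNT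
  have h0 : Lsum m b (n+1) x =
      (∑ k ∈ Finset.range (n+1), ((plF m b (n+1) (k+1)).card : ℤ) * fallFact x (n - k) m)
      + fallFact x (n+1) m := by
    rw [Lsum, Finset.sum_range_succ']
    congr 1
    · apply Finset.sum_congr rfl
      intro k hk
      congr 2
      omega
    · rw [plF_zero]
      simp
  rw [h0]
  have h1 : ∀ k ∈ Finset.range (n+1),
      ((plF m b (n+1) (k+1)).card : ℤ) * fallFact x (n - k) m
      = ((plF m b n (k+1)).card : ℤ) * fallFact x (n - k) m
        + ((b (n+1) : ℤ) + m - (b (n+1) % m : ℕ) - m * k) *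
            (((plF m b n k).card : ℤ) * fallFact x (n - k) m)
        - ((m : ℤ) - (b (n+1) % m : ℕ)) *
            (((plF m (fun j => min (b j) (m * (b (n+1) / m))) n k).card : ℤ)
              * fallFact x (n - k) m) := by
    intro k hk
    rw [card_rec m hm b n hmono k]
    ring
  rw [Finset.sum_congr rfl h1]
  rw [Finset.sum_sub_distrib, Finset.sum_add_distrib, ← Finset.mul_sum]
  have hS3 : (∑ k ∈ Finset.range (n+1),
      (((plF m (fun j => min (b j) (m * (b (n+1) / m))) n k).card : ℤ)
        * fallFact x (n - k) m)) = Lsum m (fun j => min (b j) (m * (b (n+1) / m))) n x := rfl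
  rw [hS3]
  have hS1 : (∑ k ∈ Finset.range (n+1), ((plF m b n (k+1)).card : ℤ) * fallFact x (n - k) m)
      + fallFact x (n+1) m
      = ∑ k ∈ Finset.range (n+1), ((plF m b n k).card : ℤ) * fallFact x (n+1-k) m := by
    have hA := Finset.sum_range_succ'
      (fun k => ((plF m b n k).card : ℤ) * fallFact x (n+1-k) m) (n+1)
    have hB := Finset.sum_range_succ
      (fun k => ((plF m b n k).card : ℤ) * fallFact x (n+1-k) m) (n+1)
    rw [plF_empty_of_lt m b n (n+1) (by omega)] at hB
    simp only [Finset.card_empty, Nat.cast_zero, zero_mul, add_zero] at hB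
    rw [hB] at hA
    have hA' : (∑ k ∈ Finset.range (n+1), ((plF m b n (k+1)).card : ℤ) * fallFact x (n-k) m)
        = ∑ k ∈ Finset.range (n+1), ((plF m b n (k+1)).card : ℤ) * fallFact x (n+1-(k+1)) m := by
      apply Finset.sum_congr rfl
      intro k hk
      congr 2
      omega
    rw [hA', hA]
    rw [plF_zero]
    simp
  have hgoal : (∑ k ∈ Finset.range (n+1), ((plF m b n (k+1)).card : ℤ) * fallFact x (n - k) m)
      + fallFact x (n+1) m
      + (∑ k ∈ Finset.range (n+1), (((b (n+1) : ℤ) + m - (b (n+1) % m : ℕ) - m * k) *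
          (((plF m b n k).card : ℤ) * fallFact x (n - k) m)))
      = (x + (m * (b (n+1) / m) : ℕ) + m - m * (n : ℤ)) * Lsum m b n x := by
    rw [hS1, Lsum, Finset.mul_sum, ← Finset.sum_add_distrib]
    apply Finset.sum_congr rfl
    intro k hk
    rw [Finset.mem_range] at hk
    have hkn : k ≤ n := by omega
    have hsub : n + 1 - k = (n - k) + 1 := by omega
    rw [hsub, fallFact_succ]
    have hcast : ((n - k : ℕ) : ℤ) = (n : ℤ) - (k : ℤ) := by
      push_cast [Nat.cast_sub hkn]
      ring
    rw [hcast]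
    linear_combination (-(((plF m b n k).card : ℤ) * fallFact x (n - k) m)) * hfρ
  linarith [hgoal]
/-- The factor for column `j` in the product. -/
def fac (m : ℕ) (b : ℕ → ℕ) (n : ℕ) (x : ℤ) (j : ℕ) : ℤ :=
  x + (m * (b j / m) : ℕ) - (m : ℤ) * ((j : ℤ) - 1) +
    (if j = n ∨ m * (b (j + 1) / m) ≠ m * (b j / m) then (zoneRem m b n j : ℤ) else 0)

/-- The right-hand side of the factorization theorem. -/
def Rprod (m : ℕ) (b : ℕ → ℕ) (n : ℕ) (x : ℤ) : ℤ := ∏ j ∈ Finset.Icc 1 n, fac m b n x j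

lemma fl_step (m : ℕ) (hm : 0 < m) {a c : ℕ} (hle : m * (a / m) ≤ m * (c / m))
    (h : m * (a / m) ≠ m * (c / m)) : m * (a / m) + m ≤ m * (c / m) := by
  have h1 : a / m < c / m :=
    Nat.lt_of_mul_lt_mul_left (lt_of_le_of_ne hle h)
  calc m * (a / m) + m = m * (a / m + 1) := (Nat.mul_succ _ _).symm
    _ ≤ m * (c / m) := Nat.mul_le_mul_left _ h1

lemma Rprod_rec (m : ℕ) (hm : 0 < m) (b : ℕ → ℕ) (n : ℕ)
    (hmono : ∀ j k, 1 ≤ j → j ≤ k → k ≤ n+1 → b j ≤ b k) (x : ℤ) :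
    Rprod m b (n+1) x =
      (x + (m * (b (n+1) / m) : ℕ) + m - m * (n : ℤ)) * Rprod m b n x
      - ((m : ℤ) - (b (n+1) % m : ℕ)) * Rprod m (fun j => min (b j) (m * (b (n+1) / m))) n x := by
  have hfl_mono : ∀ j i, 1 ≤ j → j ≤ i → i ≤ n+1 → m * (b j / m) ≤ m * (b i / m) :=
    fun j i h1 h2 h3 => Nat.mul_le_mul_left _ (Nat.div_le_div_right (hmono j i h1 h2 h3))
  have hdm : ∀ j, m * (b j / m) + b j % m = b j := fun j => Nat.div_add_mod (b j) m
  have hmod : ∀ j, b j % m < m := fun j => Nat.mod_lt _ hm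
  have hlt_f : ∀ j, 1 ≤ j → j ≤ n+1 → m * (b j / m) ≠ m * (b (n+1) / m) →
      b j < m * (b (n+1) / m) := by
    intro j h1 h2 hne
    have := fl_step m hm (hfl_mono j (n+1) h1 h2 (le_refl _)) hne
    have := hdm j
    have := hmod j
    omega
  have hminf : (m * (b (n+1) / m)) / m = b (n+1) / m := by
    rw [Nat.mul_div_cancel_left _ hm]
  have hmodf : (m * (b (n+1) / m)) % m = 0 := Nat.mul_mod_right m _
  have hfl' : ∀ j, 1 ≤ j → j ≤ n+1 →
      m * ((min (b j) (m * (b (n+1) / m))) / m) = m * (b j / m) := by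
    intro j h1 h2
    by_cases hj : m * (b j / m) = m * (b (n+1) / m)
    · have hge : m * (b (n+1) / m) ≤ b j := by
        have := hdm j; omega
      rw [min_eq_right hge, hminf, hj]
    · rw [min_eq_left (le_of_lt (hlt_f j h1 h2 hj))]
  have hb'_eq : ∀ j, 1 ≤ j → j ≤ n+1 → m * (b j / m) ≠ m * (b (n+1) / m) →
      min (b j) (m * (b (n+1) / m)) = b j := by
    intro j h1 h2 hne
    exact min_eq_left (le_of_lt (hlt_f j h1 h2 hne))
  have hmod' : ∀ j, 1 ≤ j → j ≤ n+1 → m * (b j / m) = m * (b (n+1) / m) →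
      (min (b j) (m * (b (n+1) / m))) % m = 0 := by
    intro j h1 h2 heq
    have hge : m * (b (n+1) / m) ≤ b j := by
      have := hdm j; omega
    rw [min_eq_right hge, hmodf]
  by_cases hzone : ∀ j, 1 ≤ j → j ≤ n → m * (b j / m) ≠ m * (b (n+1) / m)
  · -- Case A : column n+1 is alone in its zone
    have hRb' : Rprod m (fun j => min (b j) (m * (b (n+1) / m))) n x = Rprod m b n x := by
      apply Finset.prod_congr rfl
      intro j hj
      rw [Finset.mem_Icc] at hj
      have hz : zoneRem m (fun i => min (b i) (m * (b (n+1) / m))) n j = zoneRem m b n j := by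
        unfold zoneRem
        apply Finset.sum_congr rfl
        intro i hi
        rw [Finset.mem_Icc] at hi
        beta_reduce
        rw [hfl' i hi.1 (by omega), hfl' j hj.1 (by omega),
          hb'_eq i hi.1 (by omega) (hzone i hi.1 hi.2)]
      unfold fac
      beta_reduce
      rw [hfl' j hj.1 (by omega), hfl' (j+1) (by omega) (by omega), hz]
    have hfacs : ∀ j ∈ Finset.Icc 1 n, fac m b (n+1) x j = fac m b n x j := by
      intro j hj
      rw [Finset.mem_Icc] at hj
      unfold fac
      congr 1
      have hzr : zoneRem m b (n+1) j = zoneRem m b n j := by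
        unfold zoneRem
        rw [Finset.sum_Icc_succ_top (by omega : 1 ≤ n + 1)]
        rw [if_neg (fun h => (hzone j hj.1 hj.2) h.symm), add_zero]
      have hiff : (j = n + 1 ∨ m * (b (j + 1) / m) ≠ m * (b j / m)) ↔
          (j = n ∨ m * (b (j + 1) / m) ≠ m * (b j / m)) := by
        constructor
        · rintro (h | h)
          · omega
          · exact Or.inr h
        · rintro (h | h)
          · subst h
            exact Or.inr (fun hh => (hzone j hj.1 hj.2) hh.symm)
          · exact Or.inr h
      exact if_congr hiff (by exact_mod_cast congrArg (Nat.cast : ℕ → ℤ) hzr) rfl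
    have hlast : fac m b (n+1) x (n+1) =
        x + (m * (b (n+1) / m) : ℕ) - (m : ℤ) * ((n : ℤ) + 1 - 1) + (b (n+1) % m : ℕ) := by
      unfold fac
      rw [if_pos (Or.inl rfl)]
      have hzr : zoneRem m b (n+1) (n+1) = b (n+1) % m := by
        unfold zoneRem
        rw [Finset.sum_Icc_succ_top (by omega : 1 ≤ n + 1), if_pos rfl]
        have h0 : (∑ i ∈ Finset.Icc 1 n,
            if m * (b i / m) = m * (b (n+1) / m) then b i % m else 0) = 0 := by
          apply Finset.sum_eq_zero
          intro i hi
          rw [Finset.mem_Icc] at hi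
          rw [if_neg (hzone i hi.1 hi.2)]
        rw [h0, zero_add]
      rw [hzr]
      push_cast
      ring
    rw [Rprod, Finset.prod_Icc_succ_top (by omega : 1 ≤ n + 1), Finset.prod_congr rfl hfacs,
      hlast, hRb']
    show Rprod m b n x * _ = _
    push_cast
    ring
  · -- Case B : the zone of n+1 contains column n
    push_neg at hzone
    obtain ⟨j₀, hj₀1, hj₀2, hj₀f⟩ := hzone
    have hn1 : 1 ≤ n := le_trans hj₀1 hj₀2
    obtain ⟨n', rfl⟩ : ∃ n', n = n' + 1 := ⟨n - 1, by omega⟩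
    have hznn : m * (b (n'+1) / m) = m * (b (n'+2) / m) := by
      have h1 : m * (b j₀ / m) ≤ m * (b (n'+1) / m) :=
        hfl_mono j₀ (n'+1) hj₀1 hj₀2 (by omega)
      have h2 : m * (b (n'+1) / m) ≤ m * (b (n'+2) / m) :=
        hfl_mono (n'+1) (n'+2) (by omega) (by omega) (by omega)
      have hj₀f' : m * (b j₀ / m) = m * (b (n'+2) / m) := hj₀f
      omega
    have hQ1 : ∀ j ∈ Finset.Icc 1 n', fac m b (n'+2) x j = fac m b (n'+1) x j := by
      intro j hj
      rw [Finset.mem_Icc] at hj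
      unfold fac
      congr 1
      by_cases hD : m * (b (j + 1) / m) ≠ m * (b j / m)
      · rw [if_pos (Or.inr hD), if_pos (Or.inr hD)]
        have hjf : m * (b j / m) ≠ m * (b (n'+2) / m) := by
          intro h
          apply hD
          have h1 : m * (b j / m) ≤ m * (b (j+1) / m) :=
            hfl_mono j (j+1) hj.1 (by omega) (by omega)
          have h2 : m * (b (j+1) / m) ≤ m * (b (n'+2) / m) :=
            hfl_mono (j+1) (n'+2) (by omega) (by omega) (by omega)
          omega
        have hzr : zoneRem m b (n'+2) j = zoneRem m b (n'+1) j := by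
          unfold zoneRem
          rw [Finset.sum_Icc_succ_top (by omega : 1 ≤ n' + 2)]
          rw [if_neg (fun h => hjf h.symm), add_zero]
        exact_mod_cast congrArg (Nat.cast : ℕ → ℤ) hzr
      · have hc1 : ¬ (j = n' + 2 ∨ m * (b (j + 1) / m) ≠ m * (b j / m)) := by
          rintro (h | h)
          · omega
          · exact hD h
        have hc2 : ¬ (j = n' + 1 ∨ m * (b (j + 1) / m) ≠ m * (b j / m)) := by
          rintro (h | h)
          · omega
          · exact hD h
        rw [if_neg hc1, if_neg hc2]
    have hQ2 : ∀ j ∈ Finset.Icc 1 n',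
        fac m (fun i => min (b i) (m * (b (n'+2) / m))) (n'+1) x j = fac m b (n'+1) x j := by
      intro j hj
      rw [Finset.mem_Icc] at hj
      unfold fac
      beta_reduce
      rw [hfl' j hj.1 (by omega), hfl' (j+1) (by omega) (by omega)]
      congr 1
      by_cases hD : j = n' + 1 ∨ m * (b (j + 1) / m) ≠ m * (b j / m)
      · rw [if_pos hD, if_pos hD]
        have hjne : m * (b j / m) ≠ m * (b (n'+2) / m) := by
          rcases hD with h | h
          · omega
          · intro hf
            apply h
            have h1 : m * (b j / m) ≤ m * (b (j+1) / m) :=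
              hfl_mono j (j+1) hj.1 (by omega) (by omega)
            have h2 : m * (b (j+1) / m) ≤ m * (b (n'+2) / m) :=
              hfl_mono (j+1) (n'+2) (by omega) (by omega) (by omega)
            omega
        have hzr : zoneRem m (fun i => min (b i) (m * (b (n'+2) / m))) (n'+1) j
            = zoneRem m b (n'+1) j := by
          unfold zoneRem
          apply Finset.sum_congr rfl
          intro i hi
          rw [Finset.mem_Icc] at hi
          beta_reduce
          rw [hfl' i hi.1 (by omega), hfl' j hj.1 (by omega)]
          by_cases hij : m * (b i / m) = m * (b j / m)
          · rw [if_pos hij, if_pos hij, hb'_eq i hi.1 (by omega)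
              (by intro hf; rw [hij] at hf; exact hjne hf)]
          · rw [if_neg hij, if_neg hij]
        exact_mod_cast congrArg (Nat.cast : ℕ → ℤ) hzr
      · rw [if_neg hD, if_neg hD]
    have hmid1 : fac m b (n'+2) x (n'+1) =
        x + (m * (b (n'+2) / m) : ℕ) - (m : ℤ) * ((n' : ℤ) + 1 - 1) := by
      unfold fac
      rw [if_neg ?_, hznn, add_zero]
      · push_cast; ring
      · rintro (h | h)
        · omega
        · exact h hznn.symm
    have hmid2 : fac m b (n'+1) x (n'+1) =
        x + (m * (b (n'+2) / m) : ℕ) - (m : ℤ) * ((n' : ℤ) + 1 - 1)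
          + (zoneRem m b (n'+1) (n'+1) : ℤ) := by
      unfold fac
      rw [if_pos (Or.inl rfl), hznn]
      push_cast
      ring
    have hmid3 : fac m (fun i => min (b i) (m * (b (n'+2) / m))) (n'+1) x (n'+1) =
        x + (m * (b (n'+2) / m) : ℕ) - (m : ℤ) * ((n' : ℤ) + 1 - 1) := by
      unfold fac
      beta_reduce
      rw [hfl' (n'+1) (by omega) (by omega), hznn]
      rw [if_pos (Or.inl rfl)]
      have hz0 : zoneRem m (fun i => min (b i) (m * (b (n'+2) / m))) (n'+1) (n'+1) = 0 := by
        unfold zoneRem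
        apply Finset.sum_eq_zero
        intro i hi
        rw [Finset.mem_Icc] at hi
        beta_reduce
        rw [hfl' i hi.1 (by omega), hfl' (n'+1) (by omega) (by omega), hznn]
        by_cases hif : m * (b i / m) = m * (b (n'+2) / m)
        · rw [if_pos hif, hmod' i hi.1 (by omega) hif]
        · rw [if_neg hif]
      rw [hz0]
      push_cast
      ring
    have hlastB : fac m b (n'+2) x (n'+2) =
        x + (m * (b (n'+2) / m) : ℕ) - (m : ℤ) * ((n' : ℤ) + 2 - 1)
          + ((zoneRem m b (n'+1) (n'+1) : ℤ) + (b (n'+2) % m : ℕ)) := by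
      unfold fac
      rw [if_pos (Or.inl rfl)]
      have hzr : zoneRem m b (n'+2) (n'+2) = zoneRem m b (n'+1) (n'+1) + b (n'+2) % m := by
        unfold zoneRem
        rw [Finset.sum_Icc_succ_top (by omega : 1 ≤ n' + 2), if_pos rfl]
        congr 1
        apply Finset.sum_congr rfl
        intro i hi
        rw [hznn]
      rw [hzr]
      push_cast
      ring
    rw [Rprod, Rprod, Rprod]
    rw [Finset.prod_Icc_succ_top (by omega : 1 ≤ n' + 2),
      Finset.prod_Icc_succ_top (by omega : 1 ≤ n' + 1),
      Finset.prod_Icc_succ_top (by omega : 1 ≤ n' + 1),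
      Finset.prod_Icc_succ_top (by omega : 1 ≤ n' + 1)]
    rw [Finset.prod_congr rfl hQ1, Finset.prod_congr rfl hQ2]
    rw [hmid1, hmid2, hmid3, hlastB]
    push_cast
    ring
/-- The m-Factorization Theorem (Theorem 2.3): for any Ferrers board
`B = (b_1,…,b_n)` and any positive integer `m`,
`∑_k r_{k,m}(B) x↓_{n-k,m} = ∏_j F_j` where `F_j = x + ⌊b_j⌋_m − (j−1)m + ρ_m(z)` if
`j` is the last index of its zone `z` and `F_j = x + ⌊b_j⌋_m − (j−1)m` otherwise. -/
theorem m_factorization (m n : ℕ) (hm : 0 < m) (b : ℕ → ℕ)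
    (hmono : ∀ j k, 1 ≤ j → j ≤ k → k ≤ n → b j ≤ b k) (x : ℤ) :
    ∑ k ∈ Finset.range (n + 1), (rkm m b n k : ℤ) * fallFact x (n - k) m =
      ∏ j ∈ Finset.Icc 1 n,
        (x + (m * (b j / m) : ℕ) - (m : ℤ) * ((j : ℤ) - 1) +
          (if j = n ∨ m * (b (j + 1) / m) ≠ m * (b j / m) then (zoneRem m b n j : ℤ) else 0)) := by
  have key : ∀ N (c : ℕ → ℕ), (∀ j k, 1 ≤ j → j ≤ k → k ≤ N → c j ≤ c k) →
      Lsum m c N x = Rprod m c N x := by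
    intro N
    induction N with
    | zero =>
      intro c _
      simp [Lsum, Rprod, plF_zero, fallFact]
    | succ N ih =>
      intro c hc
      rw [Lsum_rec m hm c N hc x, Rprod_rec m hm c N hc x,
        ih c (fun j k h1 h2 h3 => hc j k h1 h2 (by omega)),
        ih (fun j => min (c j) (m * (c (N+1) / m)))
          (fun j k h1 h2 h3 => min_le_min (hc j k h1 h2 (by omega)) (le_refl _))]
  have hL : (∑ k ∈ Finset.range (n + 1), (rkm m b n k : ℤ) * fallFact x (n - k) m)
      = Lsum m b n x := by
    rw [Lsum]
    apply Finset.sum_congr rfl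
    intro k _
    rw [rkm_eq]
  rw [hL, key n b hmono]
  rfl
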